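/- Let p be prime and let m, n ≥ 1 and s ≥ 0 be integers. Then there exists a (Z_p^n, m, p^s) difference matrix if and only if m ≤ p^{n+s}. -/

import Mathlib

def IsAddDiffMatrix {G : Type*} [AddGroup G] {I J : Type*} (A : I → J → G) (lam : ℕ) : Prop :=
  Nat.card J = lam * Nat.card G ∧
  ∀ i ℓ : I, i ≠ ℓ → ∀ g : G, Nat.card {j : J // A i j - A ℓ j = g} = lam

/-- Fibers of a surjective additive group hom between finite groups all have the same
cardinality, namely `card α / card β`. -/
lemma fiber_card_mul {α β : Type*} [Finite α] [Finite β] [AddGroup α] [AddCommGroup β]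
    (f : α →+ β) (hf : Function.Surjective f) (g : β) :
    Nat.card β * Nat.card {x // f x = g} = Nat.card α := by
  classical
  cases nonempty_fintype α
  cases nonempty_fintype β
  have h1 : ∀ g' : β, Nat.card {x // f x = g'} = Nat.card {x // f x = g} := by
    intro g'
    obtain ⟨x0, hx0⟩ := hf g
    obtain ⟨x1, hx1⟩ := hf g'
    refine Nat.card_congr (Equiv.subtypeEquiv (Equiv.addRight (x1 - x0)) fun x => ?_).symm
    simp only [Equiv.coe_addRight, map_add, map_sub, hx0, hx1]
    constructor
    · intro h; rw [h]; abel
    · intro h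
      have : f x + (g' - g) - (g' - g) = g' - (g' - g) := by rw [h]
      simpa using this
  have h2 : Nat.card α = ∑ g' : β, Nat.card {x // f x = g'} := by
    rw [← Nat.card_congr (Equiv.sigmaFiberEquiv f)]
    simp [Nat.card_eq_fintype_card, Fintype.card_sigma]
  rw [h2]
  simp only [h1]
  simp [Finset.sum_const, Nat.card_eq_fintype_card, mul_comm]

/-- There exists a `(Z_p^n, m, p^s)` difference matrix if and only if `m ≤ p^(n+s)`. -/
theorem stmt_3 (p : ℕ) (hp : p.Prime) (m n s : ℕ) (hm : 1 ≤ m) (hn : 1 ≤ n) :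
    (∃ A : Fin m → Fin (p ^ s * p ^ n) → (Fin n → ZMod p), IsAddDiffMatrix A (p ^ s)) ↔
      m ≤ p ^ (n + s) := by
  haveI : Fact p.Prime := ⟨hp⟩
  haveI : NeZero p := ⟨hp.ne_zero⟩
  have hp1 : 1 < p := hp.one_lt
  have hNpos : 0 < p ^ s * p ^ n := by positivity
  constructor
  · -- necessity, via characters
    rintro ⟨A, -, hd⟩
    classical
    -- the character
    have hζroot : IsPrimitiveRoot (Complex.exp (2 * Real.pi * Complex.I / p)) p :=
      Complex.isPrimitiveRoot_exp p hp.ne_zero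
    set ζ : ℂ := Complex.exp (2 * Real.pi * Complex.I / p) with hζ
    have hζp : ζ ^ p = 1 := hζroot.pow_eq_one
    have hζnorm : ‖ζ‖ = 1 := Complex.norm_eq_one_of_pow_eq_one hζp hp.ne_zero
    set ψ0 : AddChar (ZMod p) ℂ := AddChar.zmodChar p hζp with hψ0
    set i0 : Fin n := ⟨0, hn⟩ with hi0
    set χ : AddChar (Fin n → ZMod p) ℂ :=
      ψ0.compAddMonoidHom (Pi.evalAddMonoidHom (fun _ => ZMod p) i0) with hχ
    have hχnorm : ∀ g, ‖χ g‖ = 1 := by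
      intro g
      simp only [hχ, AddChar.compAddMonoidHom_apply, hψ0, AddChar.zmodChar_apply]
      rw [norm_pow, hζnorm, one_pow]
    have hχne : χ ≠ 0 := by
      rw [AddChar.ne_zero_iff]
      refine ⟨Pi.single i0 1, ?_⟩
      simp only [hχ, AddChar.compAddMonoidHom_apply, Pi.evalAddMonoidHom_apply,
        Pi.single_eq_same, hψ0, AddChar.zmodChar_apply, ZMod.val_one]
      simpa using hζroot.ne_one hp1
    have hχsum : ∑ g : Fin n → ZMod p, χ g = 0 := AddChar.sum_eq_zero_iff_ne_zero.mpr hχne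
    have hχconj : ∀ g, (starRingEnd ℂ) (χ g) = χ (-g) := by
      intro g
      rw [AddChar.map_neg_eq_inv, Complex.inv_eq_conj (hχnorm g)]
    -- the vectors
    set v : Fin m → EuclideanSpace ℂ (Fin (p ^ s * p ^ n)) := fun i => WithLp.toLp 2 (fun j => χ (A i j)) with hv
    have hinner : ∀ i ℓ : Fin m, inner ℂ (v i) (v ℓ) =
        ∑ j : Fin (p ^ s * p ^ n), χ (A ℓ j - A i j) := by
      intro i ℓ
      rw [PiLp.inner_apply]
      refine Finset.sum_congr rfl fun j _ => ?_
      rw [RCLike.inner_apply, hχconj, ← AddChar.map_add_eq_mul]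
      ring_nf
    have horth : ∀ i ℓ : Fin m, i ≠ ℓ → (inner ℂ (v i) (v ℓ) : ℂ) = 0 := by
      intro i ℓ hne
      rw [hinner]
      rw [← Fintype.sum_fiberwise' (fun j : Fin (p ^ s * p ^ n) => A ℓ j - A i j) (fun g => χ g)]
      have : ∀ g : Fin n → ZMod p,
          (∑ _j : {j : Fin (p ^ s * p ^ n) // A ℓ j - A i j = g}, χ g) = (p ^ s : ℕ) • χ g := by
        intro g
        rw [Finset.sum_const, Finset.card_univ]
        congr 1
        rw [← Nat.card_eq_fintype_card]
        exact hd ℓ i (Ne.symm hne) g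
      simp only [this]
      rw [← Finset.smul_sum, hχsum, smul_zero]
    have hinner_self : ∀ i : Fin m, (inner ℂ (v i) (v i) : ℂ) = ((p ^ s * p ^ n : ℕ) : ℂ) := by
      intro i
      rw [hinner]
      have : ∀ j : Fin (p ^ s * p ^ n), χ (A i j - A i j) = 1 := by
        intro j; simp
      simp [this]
    -- normalize
    set c : ℂ := ((Real.sqrt ((p ^ s * p ^ n : ℕ) : ℝ) : ℝ) : ℂ)⁻¹ with hc
    set u : Fin m → EuclideanSpace ℂ (Fin (p ^ s * p ^ n)) := fun i => c • v i with hu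
    have hNR : (0 : ℝ) < ((p ^ s * p ^ n : ℕ) : ℝ) := by exact_mod_cast hNpos
    have hcc : (starRingEnd ℂ) c * c = (((p ^ s * p ^ n : ℕ) : ℝ) : ℂ)⁻¹ := by
      rw [hc, map_inv₀, Complex.conj_ofReal, ← mul_inv, ← Complex.ofReal_mul,
        Real.mul_self_sqrt hNR.le]
    have hortho : Orthonormal ℂ u := by
      rw [orthonormal_iff_ite]
      intro i ℓ
      have : (inner ℂ (u i) (u ℓ) : ℂ) = ((starRingEnd ℂ) c * c) * inner ℂ (v i) (v ℓ) := by
        simp only [hu, inner_smul_left, inner_smul_right]; ring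
      rw [this, hcc]
      by_cases h : i = ℓ
      · subst h
        rw [hinner_self, if_pos rfl, Complex.ofReal_natCast, inv_mul_cancel₀]
        exact_mod_cast hNpos.ne'
      · rw [horth i ℓ h, if_neg h, mul_zero]
    have hli := hortho.linearIndependent
    have hfr := hli.fintype_card_le_finrank
    rw [Fintype.card_fin, finrank_euclideanSpace_fin] at hfr
    calc m ≤ p ^ s * p ^ n := hfr
      _ = p ^ (n + s) := by rw [pow_add, mul_comm]
  · -- sufficiency, via a finite field construction
    intro hM
    classical
    have hns : n + s ≠ 0 := by omega
    haveI : Fintype (GaloisField p (n + s)) := Fintype.ofFinite _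
    have hcardF : Fintype.card (GaloisField p (n + s)) = p ^ (n + s) := by
      rw [← Nat.card_eq_fintype_card]
      exact GaloisField.card p (n + s) hns
    -- embedding of rows
    have hMF : m ≤ Fintype.card (GaloisField p (n + s)) := by rw [hcardF]; exact hM
    obtain ⟨ρ⟩ : Nonempty (Fin m ↪ GaloisField p (n + s)) := by
      rw [← Fintype.card_fin m] at hMF
      exact Function.Embedding.nonempty_iff_card_le.mpr hMF
    -- equivalence of columns
    have hcardJ : Fintype.card (Fin (p ^ s * p ^ n)) = Fintype.card (GaloisField p (n + s)) := by
      rw [Fintype.card_fin, hcardF, pow_add, mul_comm]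
    set e : Fin (p ^ s * p ^ n) ≃ GaloisField p (n + s) := Fintype.equivOfCardEq hcardJ with he
    -- the surjective linear map
    set b : Module.Basis (Fin (n + s)) (ZMod p) (GaloisField p (n + s)) :=
      Module.finBasisOfFinrankEq (ZMod p) (GaloisField p (n + s)) (GaloisField.finrank p hns) with hb
    set π : GaloisField p (n + s) →ₗ[ZMod p] (Fin n → ZMod p) :=
      (LinearMap.funLeft (ZMod p) (ZMod p) (Fin.castAdd s)).comp
        ((Finsupp.linearEquivFunOnFinite (ZMod p) (ZMod p) (Fin (n + s))).toLinearMap.comp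
          b.repr.toLinearMap) with hπ
    have hπsurj : Function.Surjective π := by
      rw [hπ]
      simp only [LinearMap.coe_comp, LinearEquiv.coe_coe]
      exact (LinearMap.funLeft_surjective_of_injective _ _ _
        (Fin.castAdd_injective n s)).comp
        ((Finsupp.linearEquivFunOnFinite (ZMod p) (ZMod p) (Fin (n + s))).surjective.comp
          b.repr.surjective)
    -- fiber sizes of π
    have hfiber : ∀ g : Fin n → ZMod p, Nat.card {x : GaloisField p (n + s) // π x = g} = p ^ s := by
      intro g
      have h := fiber_card_mul (π.toAddMonoidHom) hπsurj g
      have hcg : Nat.card (Fin n → ZMod p) = p ^ n := by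
        simp [Nat.card_eq_fintype_card, ZMod.card]
      rw [hcg, GaloisField.card p (n + s) hns, pow_add] at h
      have hpn : (0 : ℕ) < p ^ n := by positivity
      have h2 : Nat.card {x : GaloisField p (n + s) // π x = g}
          = Nat.card {x // π.toAddMonoidHom x = g} := rfl
      rw [h2]
      exact Nat.eq_of_mul_eq_mul_left hpn h
    -- the matrix
    refine ⟨fun i j => π (ρ i * e j), ?_, ?_⟩
    · simp [Nat.card_eq_fintype_card, ZMod.card]
    · intro i ℓ hne g
      have hc : ρ i - ρ ℓ ≠ 0 := sub_ne_zero.mpr fun h => hne (ρ.injective h)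
      have hdiff : ∀ j, π (ρ i * e j) - π (ρ ℓ * e j) = π ((ρ i - ρ ℓ) * e j) := by
        intro j; rw [← map_sub, sub_mul]
      have e1 : Nat.card {j : Fin (p ^ s * p ^ n) // π (ρ i * e j) - π (ρ ℓ * e j) = g}
          = Nat.card {x : GaloisField p (n + s) // π ((ρ i - ρ ℓ) * x) = g} := by
        refine Nat.card_congr (Equiv.subtypeEquiv e fun j => ?_)
        rw [hdiff j]
      have e2 : Nat.card {x : GaloisField p (n + s) // π ((ρ i - ρ ℓ) * x) = g}
          = Nat.card {y : GaloisField p (n + s) // π y = g} := by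
        refine Nat.card_congr (Equiv.subtypeEquiv (Equiv.mulLeft₀ (ρ i - ρ ℓ) hc) fun x => ?_)
        simp [Equiv.mulLeft₀]
      rw [e1, e2, hfiber g]
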